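/- Let A = [[A_ff, A_fc],[A_cf, A_cc]], let Δ_F be an invertible F×F matrix, set Z = −A_cf·Δ_F, let P = [[W],[I]] and R = [Z, I], and assume K = R·A·P is invertible. Let E = E_F·(I − P·K⁻¹·R·A) with E_F = I − [[Δ_F, 0],[0, 0]]·A, and for any C×C matrix Δ_C let E_C = I − [[0, 0],[0, Δ_C]]·A be the error propagation of C-point relaxation. Then E_C·E = E; that is, following the two-grid cycle by C-point relaxation does not change the error-propagation matrix. -/

import Mathlib

open Matrix

private lemma fromColumns_sub' {m n₁ n₂ : Type*} (A₁ C₁ : Matrix m n₁ ℝ) (A₂ C₂ : Matrix m n₂ ℝ) :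
    fromCols A₁ A₂ - fromCols C₁ C₂ = fromCols (A₁ - C₁) (A₂ - C₂) := by
  ext i (j | j) <;> simp [fromCols]

/-- **Remark 3.6 (C-point relaxation).** If `Z = −A_cf·Δ_F`, then following the two-grid
cycle `E = E_F·(I − P·K⁻¹·R·A)` by C-point relaxation `E_C = I − [[0,0],[0,Δ_C]]·A` does not
change the error-propagation matrix: `E_C·E = E`. -/
theorem C_point_relaxation_no_improvement
    {F C : Type*} [Fintype F] [Fintype C] [DecidableEq F] [DecidableEq C]
    (Aff : Matrix F F ℝ) (Afc : Matrix F C ℝ) (Acf : Matrix C F ℝ) (Acc : Matrix C C ℝ)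
    (W : Matrix F C ℝ) (ΔF : Matrix F F ℝ) (hΔF : IsUnit ΔF)
    (Z : Matrix C F ℝ) (hZ : Z = -(Acf * ΔF))
    (A : Matrix (F ⊕ C) (F ⊕ C) ℝ) (hA : A = fromBlocks Aff Afc Acf Acc)
    (P : Matrix (F ⊕ C) C ℝ) (hP : P = fromRows W 1)
    (R : Matrix C (F ⊕ C) ℝ) (hR : R = fromCols Z 1)
    (K : Matrix C C ℝ) (hK : K = R * A * P) (hKinv : IsUnit K)
    (EF : Matrix (F ⊕ C) (F ⊕ C) ℝ) (hEF : EF = 1 - fromBlocks ΔF 0 0 0 * A)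
    (E : Matrix (F ⊕ C) (F ⊕ C) ℝ) (hE : E = EF * (1 - P * K⁻¹ * R * A))
    (ΔC : Matrix C C ℝ)
    (EC : Matrix (F ⊕ C) (F ⊕ C) ℝ) (hEC : EC = 1 - fromBlocks 0 0 0 ΔC * A) :
    EC * E = E := by
  set S : Matrix C (F ⊕ C) ℝ := fromCols 0 1 with hS
  have hSA : S * A = fromCols Acf Acc := by
    rw [hS, hA, fromCols_mul_fromBlocks]
    simp
  have h1 : S * A * EF = R * A := by
    rw [hEF, Matrix.mul_sub, Matrix.mul_one, ← Matrix.mul_assoc (S * A),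
      hSA, fromCols_mul_fromBlocks, hA, fromCols_mul_fromBlocks,
      hR, fromCols_mul_fromBlocks, hZ, fromColumns_sub']
    congr 1 <;> simp <;> noncomm_ring
  have hKK : K * K⁻¹ = 1 := Matrix.mul_nonsing_inv K ((Matrix.isUnit_iff_isUnit_det K).mp hKinv)
  have key : S * A * E = 0 := by
    rw [hE, ← Matrix.mul_assoc, h1, Matrix.mul_sub, Matrix.mul_one]
    have : R * A * (P * K⁻¹ * R * A) = R * A := by
      calc R * A * (P * K⁻¹ * R * A) = (R * A * P) * K⁻¹ * (R * A) := by
            simp only [Matrix.mul_assoc]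
          _ = R * A := by rw [← hK, hKK, Matrix.one_mul]
    rw [this, sub_self]
  have hblk : fromBlocks (0 : Matrix F F ℝ) 0 0 ΔC = fromRows (0 : Matrix F C ℝ) ΔC * S := by
    rw [hS, fromRows_mul_fromCols]
    simp
  rw [hEC, Matrix.sub_mul, Matrix.one_mul, hblk, Matrix.mul_assoc, Matrix.mul_assoc,
    ← Matrix.mul_assoc S, key, Matrix.mul_zero, sub_zero]
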